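/- There exists a real number L such that lim_{ε → 0⁺} ( ∫_ε^{1/ε} t^{−2} (1 − e^{−t}) dt − log(1/ε) ) = L. -/

import Mathlib

open MeasureTheory Filter Set intervalIntegral

noncomputable def myF (t : ℝ) : ℝ := t ^ (-2 : ℤ) * (1 - Real.exp (-t))

noncomputable def myG (t : ℝ) : ℝ :=
  myF t - Set.indicator (Set.Ioc (0:ℝ) 1) (fun s => 1 / s) t

lemma myF_eq (t : ℝ) : myF t = (t ^ 2)⁻¹ * (1 - Real.exp (-t)) := by
  show t ^ (-2 : ℤ) * _ = _
  rw [zpow_neg]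
  norm_cast

lemma myF_measurable : Measurable myF := by
  have : myF = fun t => (t ^ 2)⁻¹ * (1 - Real.exp (-t)) := funext myF_eq
  rw [this]; fun_prop

lemma myG_measurable : Measurable myG := by
  refine myF_measurable.sub (Measurable.indicator (by fun_prop) measurableSet_Ioc)

lemma myF_continuousOn {s : Set ℝ} (hs : ∀ x ∈ s, x ≠ (0:ℝ)) : ContinuousOn myF s := by
  refine ContinuousOn.mul ?_ (by fun_prop)
  intro x hx
  exact (continuousAt_zpow₀ x (-2) (Or.inl (hs x hx))).continuousWithinAt

lemma myG_bound {t : ℝ} (ht : t ∈ Set.Icc (0:ℝ) 1) : |myG t| ≤ 1 := by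
  rcases eq_or_lt_of_le ht.1 with h0 | h0
  · simp [myG, myF, ← h0]
  · have ht1 : t ∈ Set.Ioc (0:ℝ) 1 := ⟨h0, ht.2⟩
    have habs : |(-t)| ≤ 1 := by rw [abs_neg, abs_of_pos h0]; exact ht.2
    have key := Real.abs_exp_sub_one_sub_id_le habs
    have hne : t ≠ 0 := ne_of_gt h0
    have : myG t = (Real.exp (-t) - 1 - (-t)) * (-(t ^ 2)⁻¹) := by
      rw [myG, myF_eq, Set.indicator_of_mem ht1]
      field_simp
      ring
    rw [this, abs_mul, abs_neg, abs_inv, abs_pow]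
    have h2 : |t| ^ 2 = t ^ 2 := by rw [abs_of_pos h0]
    rw [h2]
    have ht2 : (0:ℝ) < t ^ 2 := by positivity
    calc |Real.exp (-t) - 1 - (-t)| * (t ^ 2)⁻¹ ≤ (-t) ^ 2 * (t ^ 2)⁻¹ := by
          apply mul_le_mul_of_nonneg_right _ (by positivity)
          simpa using key
      _ = 1 := by rw [neg_pow]; field_simp
  
lemma myG_int1 : IntegrableOn myG (Set.Icc (0:ℝ) 1) := by
  refine Measure.integrableOn_of_bounded (M := 1) (by simp) myG_measurable.aestronglyMeasurable ?_
  filter_upwards [ae_restrict_mem measurableSet_Icc] with t ht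
  simpa using myG_bound ht

lemma myG_int2 : IntegrableOn myG (Set.Ioi (1:ℝ)) := by
  have hmaj : IntegrableOn (fun t : ℝ => t ^ (-2 : ℝ)) (Set.Ioi 1) :=
    integrableOn_Ioi_rpow_of_lt (by norm_num) one_pos
  refine MeasureTheory.Integrable.mono hmaj myG_measurable.aestronglyMeasurable ?_
  filter_upwards [ae_restrict_mem measurableSet_Ioi] with t ht
  have ht1 : (1:ℝ) < t := ht
  have ht0 : (0:ℝ) < t := lt_trans one_pos ht1
  have hind : Set.indicator (Set.Ioc (0:ℝ) 1) (fun s => 1 / s) t = 0 :=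
    Set.indicator_of_notMem (fun h => absurd h.2 (not_le.mpr ht1)) _
  have hexp : 0 ≤ 1 - Real.exp (-t) := by
    have : Real.exp (-t) ≤ 1 := Real.exp_le_one_iff.mpr (by linarith)
    linarith
  have hexp2 : 1 - Real.exp (-t) ≤ 1 := by
    have := Real.exp_pos (-t); linarith
  have hrw : (t:ℝ) ^ (-2 : ℝ) = (t ^ 2)⁻¹ := by
    rw [show ((-2:ℝ)) = ((-2 : ℤ) : ℝ) by norm_num, Real.rpow_intCast, zpow_neg]
    norm_cast
  have h1 : |(t ^ 2)⁻¹| = (t ^ 2)⁻¹ := abs_of_pos (by positivity)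
  have h2 : |1 - Real.exp (-t)| ≤ 1 := by rw [abs_of_nonneg hexp]; exact hexp2
  rw [myG, hind, sub_zero, myF_eq, Real.norm_eq_abs, Real.norm_eq_abs, hrw, abs_mul, h1]
  exact mul_le_of_le_one_right (by positivity) h2

/-- The quantity `∫_ε^{1/ε} t^{-2}(1-e^{-t}) dt - log(1/ε)` converges to a finite
limit as `ε → 0⁺` (paper's Lemma 4.7). -/
theorem stmt_14 :
    ∃ L : ℝ, Tendsto
      (fun ε : ℝ =>
        (∫ t in ε..(1 / ε), t ^ (-2 : ℤ) * (1 - Real.exp (-t))) - Real.log (1 / ε))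
      (nhdsWithin 0 (Set.Ioi 0)) (nhds L) := by
  refine ⟨(∫ t in (0:ℝ)..1, myG t) + ∫ t in Set.Ioi (1:ℝ), myG t, ?_⟩
  -- limit of first piece
  have hT1 : Tendsto (fun ε : ℝ => ∫ t in ε..1, myG t) (nhdsWithin 0 (Set.Ioi 0))
      (nhds (∫ t in (0:ℝ)..1, myG t)) := by
    have hcont : ContinuousOn (fun x : ℝ => ∫ t in x..1, myG t) (Set.uIcc (0:ℝ) 1) := by
      apply intervalIntegral.continuousOn_primitive_interval_left
      rw [Set.uIcc_of_le zero_le_one]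
      exact myG_int1
    have h0 : ContinuousWithinAt (fun x : ℝ => ∫ t in x..1, myG t) (Set.uIcc (0:ℝ) 1) 0 :=
      hcont 0 (by simp [Set.uIcc_of_le zero_le_one, Set.mem_Icc])
    refine h0.tendsto.mono_left (nhdsWithin_le_of_mem ?_)
    rw [Set.uIcc_of_le zero_le_one]
    exact Icc_mem_nhdsGT one_pos
  -- limit of second piece
  have hT2 : Tendsto (fun ε : ℝ => ∫ t in (1:ℝ)..(1/ε), myG t) (nhdsWithin 0 (Set.Ioi 0))
      (nhds (∫ t in Set.Ioi (1:ℝ), myG t)) := by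
    apply intervalIntegral_tendsto_integral_Ioi 1 myG_int2
    exact tendsto_inv_nhdsGT_zero.congr (fun x => (one_div x).symm)
  refine (hT1.add hT2).congr' ?_
  filter_upwards [Ioo_mem_nhdsGT_of_mem (by norm_num : (0:ℝ) ∈ Set.Ico 0 1)] with ε hε
  obtain ⟨hε0, hε1⟩ := hε
  have h1ε : (1:ℝ) ≤ 1 / ε := by rw [le_div_iff₀ hε0]; linarith
  have hεne : ε ≠ 0 := ne_of_gt hε0
  -- interval integrability of f
  have iiF1 : IntervalIntegrable myF MeasureTheory.volume ε 1 := by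
    apply ContinuousOn.intervalIntegrable
    apply myF_continuousOn
    rw [Set.uIcc_of_le hε1.le]
    intro x hx; exact ne_of_gt (lt_of_lt_of_le hε0 hx.1)
  have iiF2 : IntervalIntegrable myF MeasureTheory.volume 1 (1/ε) := by
    apply ContinuousOn.intervalIntegrable
    apply myF_continuousOn
    rw [Set.uIcc_of_le h1ε]
    intro x hx; exact ne_of_gt (lt_of_lt_of_le one_pos hx.1)
  have iiD : IntervalIntegrable (fun s : ℝ => 1 / s) MeasureTheory.volume ε 1 := by
    apply ContinuousOn.intervalIntegrable
    rw [Set.uIcc_of_le hε1.le]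
    intro x hx
    exact (continuousAt_const.div continuousAt_id (ne_of_gt (lt_of_lt_of_le hε0 hx.1))).continuousWithinAt
  -- ∫_ε^1 G = ∫_ε^1 f - log (1/ε)
  have e1 : (∫ t in ε..1, myG t) = (∫ t in ε..1, myF t) - Real.log (1/ε) := by
    have hcongr : (∫ t in ε..1, myG t) = ∫ t in ε..1, (myF t - 1 / t) := by
      apply intervalIntegral.integral_congr
      intro t ht
      rw [Set.uIcc_of_le hε1.le] at ht
      have : t ∈ Set.Ioc (0:ℝ) 1 := ⟨lt_of_lt_of_le hε0 ht.1, ht.2⟩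
      simp [myG, Set.indicator_of_mem this]
    rw [hcongr, intervalIntegral.integral_sub iiF1 iiD,
      integral_one_div (by rw [Set.uIcc_of_le hε1.le]; exact fun h => absurd h.1 (not_le.mpr hε0))]
  -- ∫_1^{1/ε} G = ∫_1^{1/ε} f
  have e2 : (∫ t in (1:ℝ)..(1/ε), myG t) = ∫ t in (1:ℝ)..(1/ε), myF t := by
    apply intervalIntegral.integral_congr_ae
    filter_upwards with t ht
    rw [Set.uIoc_of_le h1ε] at ht
    have hind : Set.indicator (Set.Ioc (0:ℝ) 1) (fun s => 1 / s) t = 0 :=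
      Set.indicator_of_notMem (fun h => absurd h.2 (not_le.mpr ht.1)) _
    rw [myG, hind, sub_zero]
  have hsplit : (∫ t in ε..(1/ε), myF t) = (∫ t in ε..1, myF t) + ∫ t in (1:ℝ)..(1/ε), myF t :=
    (intervalIntegral.integral_add_adjacent_intervals iiF1 iiF2).symm
  show (∫ t in ε..1, myG t) + (∫ t in (1:ℝ)..(1/ε), myG t)
      = (∫ t in ε..(1/ε), t ^ (-2 : ℤ) * (1 - Real.exp (-t))) - Real.log (1 / ε)
  rw [e1, e2, show (fun t : ℝ => t ^ (-2 : ℤ) * (1 - Real.exp (-t))) = myF from rfl]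
  rw [hsplit]
  ring
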